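/- Let d ≥ 6 and (t_r)_{r≥2} nonnegative integers with D = 3 - 2d + Σ_{r≥2}(r-1)t_r > 0. If (9 - 5d + Σ_{r≥2}(3r-4)t_r)/D ≥ 8/3 and the stronger Hirzebruch inequality t_2 + (3/4)t_3 ≥ d + Σ_{r≥5}(r-4)t_r holds, then Σ_{r≥5}(r-4)t_r + d + 2t_2 ≤ 9; in particular d ≤ 9. -/

import Mathlib

open Finset

private lemma sum_extend (t : ℕ → ℕ) (f : ℕ → ℤ) (a N M : ℕ) (hNM : N ≤ M)
    (hsupp : ∀ r, N < r → t r = 0) :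
    ∑ r ∈ Finset.Icc a N, f r * t r = ∑ r ∈ Finset.Icc a M, f r * t r := by
  apply Finset.sum_subset
  · exact Finset.Icc_subset_Icc le_rfl hNM
  · intro x hx hx'
    simp only [Finset.mem_Icc] at hx hx'
    have : N < x := by omega
    simp [hsupp x this]

/-- Combining `γ ≥ 8/3` with the stronger Hirzebruch inequality forces
`Σ_{r≥5}(r-4)t_r + d + 2t_2 ≤ 9`, in particular `d ≤ 9`. -/
theorem stmt_3 (d N : ℕ) (t : ℕ → ℕ) (hd : 6 ≤ d)
    (hsupp : ∀ r, N < r → t r = 0)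
    (hden : (0 : ℤ) < 3 - 2 * d + ∑ r ∈ Finset.Icc 2 N, ((r : ℤ) - 1) * t r)
    (hslope : (((9 - 5 * d + ∑ r ∈ Finset.Icc 2 N, (3 * (r : ℤ) - 4) * t r : ℤ) : ℚ) /
      ((3 - 2 * d + ∑ r ∈ Finset.Icc 2 N, ((r : ℤ) - 1) * t r : ℤ) : ℚ) ≥ 8 / 3))
    (hHir : (t 2 : ℚ) + (3 / 4) * t 3 ≥
      (d : ℚ) + ∑ r ∈ Finset.Icc 5 N, ((r : ℚ) - 4) * t r) :
    ((∑ r ∈ Finset.Icc 5 N, ((r : ℤ) - 4) * t r) + d + 2 * t 2 ≤ 9) ∧ d ≤ 9 := by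
  set M := max N 4 with hM
  have hNM : N ≤ M := le_max_left _ _
  have hM4 : 4 ≤ M := le_max_right _ _
  -- rewrite all sums over Icc _ M
  have hA : ∑ r ∈ Finset.Icc 2 N, ((r : ℤ) - 1) * t r
      = ∑ r ∈ Finset.Icc 2 M, ((r : ℤ) - 1) * t r :=
    sum_extend t (fun r => (r : ℤ) - 1) 2 N M hNM hsupp
  have hB : ∑ r ∈ Finset.Icc 2 N, (3 * (r : ℤ) - 4) * t r
      = ∑ r ∈ Finset.Icc 2 M, (3 * (r : ℤ) - 4) * t r :=
    sum_extend t (fun r => 3 * (r : ℤ) - 4) 2 N M hNM hsupp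
  have hS : ∑ r ∈ Finset.Icc 5 N, ((r : ℤ) - 4) * t r
      = ∑ r ∈ Finset.Icc 5 M, ((r : ℤ) - 4) * t r :=
    sum_extend t (fun r => (r : ℤ) - 4) 5 N M hNM hsupp
  -- splitting lemma for sums over Icc 2 M
  have hsplit : ∀ f : ℕ → ℤ, ∑ r ∈ Finset.Icc 2 M, f r * t r
      = f 2 * t 2 + f 3 * t 3 + f 4 * t 4 + ∑ r ∈ Finset.Icc 5 M, f r * t r := by
    intro f
    have h1 : Finset.Icc 2 M = Finset.Ioc 1 M := by rw [← Finset.Icc_add_one_left_eq_Ioc]; rfl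
    have h2 : Finset.Icc 5 M = Finset.Ioc 4 M := by rw [← Finset.Icc_add_one_left_eq_Ioc]; rfl
    rw [h1, h2, ← Finset.sum_Ioc_consecutive _ (by norm_num : (1:ℕ) ≤ 4) hM4]
    have : Finset.Ioc (1:ℕ) 4 = {2, 3, 4} := by decide
    rw [this]
    simp [Finset.sum_insert, Finset.mem_insert]
    ring
  set S : ℤ := ∑ r ∈ Finset.Icc 5 M, ((r : ℤ) - 4) * t r with hSdef
  have hSnn : 0 ≤ S := by
    apply Finset.sum_nonneg
    intro r hr
    simp only [Finset.mem_Icc] at hr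
    have : (5 : ℤ) ≤ r := by exact_mod_cast hr.1
    exact mul_nonneg (by linarith) (by positivity)
  -- slope inequality in ℤ
  have hkey : 3 * (9 - 5 * (d:ℤ) + ∑ r ∈ Finset.Icc 2 N, (3 * (r : ℤ) - 4) * t r)
      ≥ 8 * (3 - 2 * d + ∑ r ∈ Finset.Icc 2 N, ((r : ℤ) - 1) * t r) := by
    have hbpos : (0 : ℚ) < ((3 - 2 * (d:ℤ) + ∑ r ∈ Finset.Icc 2 N, ((r : ℤ) - 1) * t r : ℤ) : ℚ) := by
      exact_mod_cast hden
    rw [ge_iff_le, div_le_div_iff₀ (by norm_num) hbpos] at hslope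
    exact_mod_cast (by linarith : (8 : ℚ) * ((3 - 2 * (d:ℤ) + ∑ r ∈ Finset.Icc 2 N, ((r : ℤ) - 1) * t r : ℤ) : ℚ)
      ≤ 3 * ((9 - 5 * (d:ℤ) + ∑ r ∈ Finset.Icc 2 N, (3 * (r : ℤ) - 4) * t r : ℤ) : ℚ))
  rw [hA, hB] at hkey
  rw [hsplit (fun r => (r : ℤ) - 1), hsplit (fun r => 3 * (r : ℤ) - 4)] at hkey
  -- S ≥ 2*t2 + t3 - 3 - d  over ℤ
  have hslopeZ : S ≥ 2 * (t 2 : ℤ) + t 3 - 3 - d := by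
    have hdiff : 3 * (∑ r ∈ Finset.Icc 5 M, (3 * (r:ℤ) - 4) * t r)
        - 8 * (∑ r ∈ Finset.Icc 5 M, ((r:ℤ) - 1) * t r) = S := by
      rw [hSdef, Finset.mul_sum, Finset.mul_sum, ← Finset.sum_sub_distrib]
      apply Finset.sum_congr rfl
      intro r _
      ring
    norm_num at hkey
    linarith [hkey, hdiff]
  -- Hirzebruch in ℚ with S
  have hSQ : ∑ r ∈ Finset.Icc 5 N, ((r : ℚ) - 4) * t r = (S : ℚ) := by
    rw [← hS]
    push_cast
    rfl
  rw [hSQ] at hHir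
  have hcast : ((2 * (t 2 : ℤ) + t 3 - 3 - d : ℤ) : ℚ) ≤ (S : ℚ) := by exact_mod_cast hslopeZ
  push_cast at hcast
  have hfin : (S : ℚ) + d + 2 * t 2 ≤ 9 := by linarith
  have hfinZ : S + (d : ℤ) + 2 * t 2 ≤ 9 := by exact_mod_cast hfin
  constructor
  · rw [hS]; linarith
  · have : (t 2 : ℤ) ≥ 0 := by positivity
    omega
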